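/- For every circuit $u$ of $A$, the binomial $x^{u_+} - x^{u_-}$ belongs to the universal Gröbner basis $\mathcal{U}_A$ of the toric ideal $I_A$, i.e. it appears in the reduced Gröbner basis of $I_A$ for some term order. -/

import Mathlib

open MvPolynomial

noncomputable section

universe u

variable {α β : Type*} [Fintype α] [Fintype β]

/-- The Laurent monomial `t^a` in the group algebra `ℂ[ℤ^α]` (the Laurent polynomial ring). -/
def laurentMonomial (a : α → ℤ) : AddMonoidAlgebra ℂ (α →₀ ℤ) :=
  AddMonoidAlgebra.single (Finsupp.equivFunOnFinite.symm a) 1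

/-- The monomial map `φ_A : x_j ↦ t^{a_j}` where `a_j` is the `j`-th column of `A`. -/
def phiMap (A : Matrix α β ℤ) : MvPolynomial β ℂ →ₐ[ℂ] AddMonoidAlgebra ℂ (α →₀ ℤ) :=
  MvPolynomial.aeval fun j => laurentMonomial fun i => A i j

/-- The toric ideal `I_A`, the kernel of `φ_A`. -/
def toricIdeal (A : Matrix α β ℤ) : Ideal (MvPolynomial β ℂ) :=
  RingHom.ker (phiMap A).toRingHom

/-- The leading monomial (exponent vector) of `f` with respect to a monomial order. -/
def leadMon (m : MonomialOrder β) (f : MvPolynomial β ℂ) : β →₀ ℕ :=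
  m.toSyn.symm (f.support.sup m.toSyn)

/-- The leading coefficient of `f` with respect to a monomial order. -/
def leadCoeff (m : MonomialOrder β) (f : MvPolynomial β ℂ) : ℂ := f.coeff (leadMon m f)

/-- `G` is a Gröbner basis of `I`: a finite set of nonzero elements of `I` whose leading
monomials generate the initial ideal of `I` (i.e. the leading monomial of every nonzero
element of `I` is divisible by the leading monomial of some element of `G`). -/
def IsGroebnerBasis (m : MonomialOrder β) (I : Ideal (MvPolynomial β ℂ))
    (G : Set (MvPolynomial β ℂ)) : Prop :=
  G.Finite ∧ (∀ g ∈ G, g ∈ I ∧ g ≠ 0) ∧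
    ∀ f ∈ I, f ≠ 0 → ∃ g ∈ G, leadMon m g ≤ leadMon m f

/-- `G` is the reduced Gröbner basis of `I`: a Gröbner basis, all of whose elements are monic,
such that no monomial occurring in an element of `G` is divisible by the leading monomial of
another element of `G`. -/
def IsReducedGroebnerBasis (m : MonomialOrder β) (I : Ideal (MvPolynomial β ℂ))
    (G : Set (MvPolynomial β ℂ)) : Prop :=
  IsGroebnerBasis m I G ∧ (∀ g ∈ G, leadCoeff m g = 1) ∧
    ∀ g ∈ G, ∀ g' ∈ G, g' ≠ g → ∀ c ∈ g.support, ¬ leadMon m g' ≤ c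

/-- The positive part `w⁺` of an integer vector, as an exponent vector. -/
def posPart (w : β → ℤ) : β →₀ ℕ := Finsupp.equivFunOnFinite.symm fun i => (w i).toNat

/-- The negative part `w⁻` of an integer vector, as an exponent vector. -/
def negPart (w : β → ℤ) : β →₀ ℕ := Finsupp.equivFunOnFinite.symm fun i => (-(w i)).toNat

/-- The binomial `x^{w⁺} - x^{w⁻}` associated to an integer vector `w`. -/
def binom (w : β → ℤ) : MvPolynomial β ℂ := monomial (posPart w) 1 - monomial (negPart w) 1

/-- A circuit of `A`: a nonzero integer vector in `ker A` with coprime entries whose support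
is minimal with respect to inclusion among supports of nonzero elements of `ker A`. -/
def IsCircuit (A : Matrix α β ℤ) (u : β → ℤ) : Prop :=
  u ≠ 0 ∧ A.mulVec u = 0 ∧ Finset.gcd Finset.univ u = 1 ∧
    ∀ v : β → ℤ, v ≠ 0 → A.mulVec v = 0 →
      {i | v i ≠ 0} ⊆ {i | u i ≠ 0} → {i | v i ≠ 0} = {i | u i ≠ 0}

/-- A sign pattern `ρ ∈ {+1,-1}^n`. -/
def IsSignPattern (ρ : β → ℤ) : Prop := ∀ i, ρ i = 1 ∨ ρ i = -1

/-- Membership in `H_ρ = ℝ^n_ρ ∩ ker_ℤ(A)`: integer kernel elements conforming to the sign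
pattern `ρ`. -/
def MemH (A : Matrix α β ℤ) (ρ : β → ℤ) (w : β → ℤ) : Prop :=
  A.mulVec w = 0 ∧ ∀ i, 0 ≤ ρ i * w i

/-- `w` belongs to the Hilbert basis of the pointed cone `H_ρ`: it is a nonzero element of
`H_ρ` which cannot be written as the sum of two nonzero elements of `H_ρ` (equivalently, it
belongs to the unique minimal generating set of the monoid `H_ρ`). -/
def IsHilbertBasisElem (A : Matrix α β ℤ) (ρ : β → ℤ) (w : β → ℤ) : Prop :=
  MemH A ρ w ∧ w ≠ 0 ∧
    ¬ ∃ a b : β → ℤ, MemH A ρ a ∧ MemH A ρ b ∧ a ≠ 0 ∧ b ≠ 0 ∧ w = a + b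

/-- `w` is a Graver basis vector of `A`: a member of the Hilbert basis of `H_ρ` for some
sign pattern `ρ`. -/
def IsGraverVector (A : Matrix α β ℤ) (w : β → ℤ) : Prop :=
  ∃ ρ : β → ℤ, IsSignPattern ρ ∧ IsHilbertBasisElem A ρ w

/-- The Graver basis `Gr_A` of the toric ideal `I_A`, as a set of binomials. -/
def graverBasis (A : Matrix α β ℤ) : Set (MvPolynomial β ℂ) :=
  { p | ∃ w : β → ℤ, IsGraverVector A w ∧ p = binom w }

/-- The degree of the binomial `x^{w⁺} - x^{w⁻}`, namely `max(Σ w⁺, Σ w⁻)`. -/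
def degZ (w : β → ℤ) : ℕ := max (∑ i, (w i).toNat) (∑ i, (-(w i)).toNat)

/-- The columns of `A` generate a pointed cone. -/
def PointedCone' (A : Matrix α β ℤ) : Prop :=
  ∀ c : β → ℚ, (∀ i, 0 ≤ c i) → (A.map (Int.cast : ℤ → ℚ)).mulVec c = 0 → c = 0

/-- The row span of `A` contains the all-ones vector. -/
def RowSpanOne (A : Matrix α β ℤ) : Prop :=
  ∃ w : α → ℚ, (A.map (Int.cast : ℤ → ℚ)).vecMul w = fun _ => 1

/-- The universal Gröbner basis of an ideal: the union of its reduced Gröbner bases over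
all term orders. -/
def universalGroebnerBasis {γ : Type u} [Fintype γ] (I : Ideal (MvPolynomial γ ℂ)) :
    Set (MvPolynomial γ ℂ) :=
  { p | ∃ (m : MonomialOrder.{u, u} γ) (G : Set (MvPolynomial γ ℂ)),
      IsReducedGroebnerBasis m I G ∧ p ∈ G }

/-- The initial ideal of `I` with respect to a monomial order: the monomial ideal generated by
the leading monomials of the nonzero elements of `I`. -/
def initialIdeal (m : MonomialOrder β) (I : Ideal (MvPolynomial β ℂ)) :
    Ideal (MvPolynomial β ℂ) :=
  Ideal.span { p | ∃ f ∈ I, f ≠ 0 ∧ p = monomial (leadMon m f) (1 : ℂ) }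


set_option linter.unusedSectionVars false
set_option maxHeartbeats 1000000

section Generic

variable (m : MonomialOrder β) (I : Ideal (MvPolynomial β ℂ))

/-- leading monomials of nonzero elements of I -/
def Lset : Set (β →₀ ℕ) := {μ | ∃ f ∈ I, f ≠ 0 ∧ leadMon m f = μ}

/-- minimal elements of Lset -/
def Mset : Set (β →₀ ℕ) := {μ | μ ∈ Lset m I ∧ ∀ ν ∈ Lset m I, ν ≤ μ → ν = μ}

/-- the candidate reduced Gröbner basis -/
def Gset : Set (MvPolynomial β ℂ) :=
  {g | g ∈ I ∧ g ≠ 0 ∧ leadMon m g ∈ Mset m I ∧ leadCoeff m g = 1 ∧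
    ∀ c ∈ g.support, c ≠ leadMon m g → c ∉ Lset m I}

variable {m I}

lemma leadMon_mem_support {f : MvPolynomial β ℂ} (hf : f ≠ 0) : leadMon m f ∈ f.support := by
  obtain ⟨b, hb, h⟩ := Finset.exists_mem_eq_sup f.support
    (MvPolynomial.support_nonempty.mpr hf) m.toSyn
  rw [leadMon, h]; simpa using hb

lemma le_leadMon {f : MvPolynomial β ℂ} {c : β →₀ ℕ} (hc : c ∈ f.support) :
    m.toSyn c ≤ m.toSyn (leadMon m f) := by
  rw [leadMon, AddEquiv.apply_symm_apply]
  exact Finset.le_sup hc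

lemma lt_leadMon {f : MvPolynomial β ℂ} {c : β →₀ ℕ} (hc : c ∈ f.support)
    (hne : c ≠ leadMon m f) : m.toSyn c < m.toSyn (leadMon m f) :=
  lt_of_le_of_ne (le_leadMon hc) (fun h => hne (m.toSyn.injective h))

lemma leadCoeff_ne_zero {f : MvPolynomial β ℂ} (hf : f ≠ 0) : leadCoeff m f ≠ 0 := by
  have := leadMon_mem_support (m := m) hf
  rwa [MvPolynomial.mem_support_iff] at this

lemma leadMon_eq_of {f : MvPolynomial β ℂ} {μ : β →₀ ℕ} (hμ : μ ∈ f.support)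
    (h : ∀ c ∈ f.support, m.toSyn c ≤ m.toSyn μ) : leadMon m f = μ := by
  rw [leadMon]
  have : f.support.sup m.toSyn = m.toSyn μ :=
    le_antisymm (Finset.sup_le h) (Finset.le_sup hμ)
  rw [this, AddEquiv.symm_apply_apply]

lemma leadMon_monomial {μ : β →₀ ℕ} {c : ℂ} (hc : c ≠ 0) :
    leadMon m (monomial μ c) = μ := by
  classical
  apply leadMon_eq_of
  · rw [MvPolynomial.mem_support_iff, MvPolynomial.coeff_monomial, if_pos rfl]; exact hc
  · intro e he
    rw [MvPolynomial.mem_support_iff, MvPolynomial.coeff_monomial] at he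
    rcases eq_or_ne μ e with h | h
    · rw [h]
    · rw [if_neg h] at he; exact absurd rfl he

lemma mem_Lset {f : MvPolynomial β ℂ} (hfI : f ∈ I) (hf : f ≠ 0) : leadMon m f ∈ Lset m I :=
  ⟨f, hfI, hf, rfl⟩

/-- Lset is upward closed -/
lemma Lset_upper {μ ν : β →₀ ℕ} (hμ : μ ∈ Lset m I) (hle : μ ≤ ν) : ν ∈ Lset m I := by
  obtain ⟨f, hfI, hf, hlead⟩ := hμ
  set δ := ν - μ with hδ
  have hνμ : δ + μ = ν := by
    ext i
    simp only [hδ, Finsupp.add_apply, Finsupp.tsub_apply]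
    have := hle i; omega
  refine ⟨monomial δ 1 * f, Ideal.mul_mem_left _ _ hfI, ?_, ?_⟩
  · intro h
    apply hf
    have : (monomial δ (1:ℂ)) ≠ 0 := by
      rw [Ne, MvPolynomial.monomial_eq_zero]; exact one_ne_zero
    exact (mul_eq_zero.mp h).resolve_left this
  · apply leadMon_eq_of
    · rw [MvPolynomial.mem_support_iff, ← hνμ, MvPolynomial.coeff_monomial_mul, ← hlead]
      simpa [leadCoeff] using leadCoeff_ne_zero hf
    · intro e he
      rw [MvPolynomial.mem_support_iff] at he
      -- e must be of the form δ + e' with e' ∈ supp f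
      by_cases hge : δ ≤ e
      · have he' : MvPolynomial.coeff (e - δ) f ≠ 0 := by
          have : δ + (e - δ) = e := by
            ext i; simp only [Finsupp.add_apply, Finsupp.tsub_apply]
            have := hge i; omega
          rw [← this, MvPolynomial.coeff_monomial_mul, one_mul] at he
          exact he
        have h1 : m.toSyn (e - δ) ≤ m.toSyn (leadMon m f) :=
          le_leadMon (MvPolynomial.mem_support_iff.mpr he')
        have h2 : e = δ + (e - δ) := by
          ext i; simp only [Finsupp.add_apply, Finsupp.tsub_apply]
          have := hge i; omega
        calc m.toSyn e = m.toSyn δ + m.toSyn (e - δ) := by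
              rw [congrArg m.toSyn h2, map_add]
        _ ≤ m.toSyn δ + m.toSyn (leadMon m f) := by exact add_le_add_right h1 _
        _ = m.toSyn ν := by rw [← map_add, hlead, hνμ]
      · exfalso
        apply he
        -- coeff of monomial δ 1 * f at e is 0 when ¬ δ ≤ e
        classical
        rw [MvPolynomial.coeff_monomial_mul']
        rw [if_neg hge]


lemma exists_Mset_le {μ : β →₀ ℕ} (hμ : μ ∈ Lset m I) : ∃ ν ∈ Mset m I, ν ≤ μ := by
  have H : ∀ s : m.syn, ∀ μ : β →₀ ℕ, m.toSyn μ = s → μ ∈ Lset m I →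
      ∃ ν ∈ Mset m I, ν ≤ μ := by
    intro s
    induction s using WellFoundedLT.induction with
    | _ s ih =>
      intro μ hs hμ
      by_cases h : ∀ ν ∈ Lset m I, ν ≤ μ → ν = μ
      · exact ⟨μ, ⟨hμ, h⟩, le_refl μ⟩
      · push_neg at h
        obtain ⟨ν, hν, hle, hne⟩ := h
        have hlt : m.toSyn ν < s := hs ▸ lt_of_le_of_ne (m.toSyn_monotone hle)
          (fun h => hne (m.toSyn.injective h))
        obtain ⟨ρ, hρ, hρle⟩ := ih (m.toSyn ν) hlt ν rfl hν
        exact ⟨ρ, hρ, hρle.trans hle⟩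
  exact H (m.toSyn μ) μ rfl hμ

lemma Mset_finite : (Mset m I).Finite := by
  refine IsAntichain.finite_of_partiallyWellOrderedOn (r := (· ≤ ·)) ?_ (Set.isPWO_of_wellQuasiOrderedLE _)
  intro a ha b hb hne hle
  exact hne (hb.2 a ha.1 hle)

lemma exists_monic {μ : β →₀ ℕ} (hμ : μ ∈ Lset m I) :
    ∃ f ∈ I, leadMon m f = μ ∧ leadCoeff m f = 1 := by
  obtain ⟨f, hfI, hf, hlead⟩ := hμ
  set c := leadCoeff m f with hc
  have hc0 : c ≠ 0 := leadCoeff_ne_zero hf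
  refine ⟨c⁻¹ • f, ?_, ?_, ?_⟩
  · rw [MvPolynomial.smul_eq_C_mul]; exact Ideal.mul_mem_left _ _ hfI
  · have hsupp : (c⁻¹ • f).support = f.support :=
      MvPolynomial.support_smul_eq (inv_ne_zero hc0) f
    rw [leadMon, hsupp, ← leadMon, hlead]
  · have hsupp : (c⁻¹ • f).support = f.support :=
      MvPolynomial.support_smul_eq (inv_ne_zero hc0) f
    rw [leadCoeff, leadMon, hsupp, ← leadMon, MvPolynomial.coeff_smul, smul_eq_mul]
    exact inv_mul_cancel₀ hc0

lemma ne_zero_of_leadCoeff_one {g : MvPolynomial β ℂ} (h : leadCoeff m g = 1) : g ≠ 0 := by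
  intro h0; rw [h0] at h; simp [leadCoeff] at h

lemma exists_reduced {μ : β →₀ ℕ} (hμ : μ ∈ Lset m I) :
    ∃ g ∈ I, leadMon m g = μ ∧ leadCoeff m g = 1 ∧
      ∀ c ∈ g.support, c ≠ μ → c ∉ Lset m I := by
  classical
  have H : ∀ s : m.syn, ∀ g ∈ I, leadMon m g = μ → leadCoeff m g = 1 →
      (g.support.filter fun c => c ≠ μ ∧ c ∈ Lset m I).sup m.toSyn = s →
      ∃ g' ∈ I, leadMon m g' = μ ∧ leadCoeff m g' = 1 ∧
        ∀ c ∈ g'.support, c ≠ μ → c ∉ Lset m I := by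
    intro s
    induction s using WellFoundedLT.induction with
    | _ s ih =>
      intro g hgI hglead hgmonic hsup
      set Bad := g.support.filter fun c => c ≠ μ ∧ c ∈ Lset m I with hBad
      rcases Finset.eq_empty_or_nonempty Bad with hB | hB
      · refine ⟨g, hgI, hglead, hgmonic, fun c hc hcμ hcL => ?_⟩
        have : c ∈ Bad := Finset.mem_filter.mpr ⟨hc, hcμ, hcL⟩
        rw [hB] at this; exact absurd this (Finset.notMem_empty c)
      · obtain ⟨c, hcB, hcsup⟩ := Finset.exists_mem_eq_sup Bad hB m.toSyn
        obtain ⟨hcsupp, hcμ, hcL⟩ := Finset.mem_filter.mp hcB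
        have hclt : m.toSyn c < m.toSyn μ := by
          have := lt_leadMon hcsupp (show c ≠ leadMon m g by rw [hglead]; exact hcμ)
          rwa [hglead] at this
        obtain ⟨h, hhI, hhlead, hhmonic⟩ := exists_monic hcL
        set g' := g - (g.coeff c) • h with hg'
        have hcoe : ∀ e, g'.coeff e = g.coeff e - g.coeff c * h.coeff e := by
          intro e
          rw [hg', MvPolynomial.coeff_sub, MvPolynomial.coeff_smul, smul_eq_mul]
        have hμh : h.coeff μ = 0 := by
          by_contra hne
          have := le_leadMon (m := m) (MvPolynomial.mem_support_iff.mpr hne)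
          rw [hhlead] at this
          exact absurd (lt_of_le_of_lt this hclt) (lt_irrefl _)
        have hμg' : g'.coeff μ = 1 := by
          rw [hcoe, hμh, mul_zero, sub_zero, ← hglead]; exact hgmonic
        have hsupp' : ∀ e ∈ g'.support, m.toSyn e ≤ m.toSyn μ := by
          intro e he
          rw [MvPolynomial.mem_support_iff, hcoe] at he
          by_cases heg : g.coeff e = 0
          · have heh : h.coeff e ≠ 0 := by
              intro h0; rw [heg, h0, mul_zero, sub_zero] at he; exact he rfl
            have := le_leadMon (m := m) (MvPolynomial.mem_support_iff.mpr heh)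
            rw [hhlead] at this
            exact le_of_lt (lt_of_le_of_lt this hclt)
          · have := le_leadMon (m := m) (MvPolynomial.mem_support_iff.mpr heg)
            rw [hglead] at this; exact this
        have hg'lead : leadMon m g' = μ := by
          apply leadMon_eq_of
          · rw [MvPolynomial.mem_support_iff, hμg']; exact one_ne_zero
          · exact hsupp'
        have hg'monic : leadCoeff m g' = 1 := by rw [leadCoeff, hg'lead]; exact hμg'
        have hcg' : g'.coeff c = 0 := by
          rw [hcoe]
          have : h.coeff c = 1 := by rw [← hhlead]; exact hhmonic
          rw [this, mul_one, sub_self]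
        have hbadlt : ∀ e ∈ (g'.support.filter fun c => c ≠ μ ∧ c ∈ Lset m I),
            m.toSyn e < m.toSyn c := by
          intro e heB
          obtain ⟨hesupp, heμ, heL⟩ := Finset.mem_filter.mp heB
          have hec : e ≠ c := by
            intro h0; rw [h0, MvPolynomial.mem_support_iff] at hesupp
            exact hesupp hcg'
          rw [MvPolynomial.mem_support_iff, hcoe] at hesupp
          by_cases heg : g.coeff e = 0
          · have heh : h.coeff e ≠ 0 := by
              intro h0; rw [heg, h0, mul_zero, sub_zero] at hesupp; exact hesupp rfl
            have := lt_leadMon (MvPolynomial.mem_support_iff.mpr heh)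
              (show e ≠ leadMon m h by rw [hhlead]; exact hec)
            rwa [hhlead] at this
          · have : e ∈ Bad := Finset.mem_filter.mpr
              ⟨MvPolynomial.mem_support_iff.mpr heg, heμ, heL⟩
            have hle := Finset.le_sup (f := m.toSyn) this
            rw [hcsup] at hle
            exact lt_of_le_of_ne hle (fun h0 => hec (m.toSyn.injective h0))
        have hg'I : g' ∈ I := by
          rw [hg', MvPolynomial.smul_eq_C_mul]
          exact Ideal.sub_mem _ hgI (Ideal.mul_mem_left _ _ hhI)
        set Bad' := g'.support.filter fun c => c ≠ μ ∧ c ∈ Lset m I with hBad'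
        rcases Finset.eq_empty_or_nonempty Bad' with hB' | hB'
        · refine ⟨g', hg'I, hg'lead, hg'monic, fun e he heμ heL => ?_⟩
          have : e ∈ Bad' := Finset.mem_filter.mpr ⟨he, heμ, heL⟩
          rw [hB'] at this; exact absurd this (Finset.notMem_empty e)
        · have hlt : Bad'.sup m.toSyn < s := by
            rw [← hsup, hcsup]
            obtain ⟨e0, he0⟩ := hB'
            have hbot : (⊥ : m.syn) < m.toSyn c := lt_of_le_of_lt bot_le (hbadlt e0 he0)
            rw [Finset.sup_lt_iff hbot]
            exact hbadlt
          exact ih _ hlt g' hg'I hg'lead hg'monic rfl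
  obtain ⟨f, hfI, hflead, hfmonic⟩ := exists_monic hμ
  exact H _ f hfI hflead hfmonic rfl

lemma reduced_unique {g g' : MvPolynomial β ℂ} {μ : β →₀ ℕ}
    (hgI : g ∈ I) (hglead : leadMon m g = μ) (hgmonic : leadCoeff m g = 1)
    (hgred : ∀ c ∈ g.support, c ≠ μ → c ∉ Lset m I)
    (hg'I : g' ∈ I) (hg'lead : leadMon m g' = μ) (hg'monic : leadCoeff m g' = 1)
    (hg'red : ∀ c ∈ g'.support, c ≠ μ → c ∉ Lset m I) : g = g' := by
  by_contra hne
  set h := g - g' with hh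
  have hh0 : h ≠ 0 := sub_ne_zero.mpr hne
  have hhI : h ∈ I := Ideal.sub_mem _ hgI hg'I
  set ν := leadMon m h with hν
  have hνL : ν ∈ Lset m I := mem_Lset hhI hh0
  have hνsupp : ν ∈ h.support := leadMon_mem_support hh0
  have hνμ : ν ≠ μ := by
    intro h0
    rw [MvPolynomial.mem_support_iff, hh, MvPolynomial.coeff_sub, h0] at hνsupp
    have h1 : g.coeff μ = 1 := hglead ▸ hgmonic
    have h2 : g'.coeff μ = 1 := hg'lead ▸ hg'monic
    rw [h1, h2, sub_self] at hνsupp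
    exact hνsupp rfl
  rw [MvPolynomial.mem_support_iff, hh, MvPolynomial.coeff_sub] at hνsupp
  by_cases hg : g.coeff ν = 0
  · have : g'.coeff ν ≠ 0 := by intro h0; rw [hg, h0, sub_self] at hνsupp; exact hνsupp rfl
    exact hg'red ν (MvPolynomial.mem_support_iff.mpr this) hνμ hνL
  · exact hgred ν (MvPolynomial.mem_support_iff.mpr hg) hνμ hνL

theorem Gset_isReducedGB : IsReducedGroebnerBasis m I (Gset m I) := by
  constructor
  · constructor
    · -- finiteness
      apply Set.Finite.of_finite_image (f := leadMon m)
      · exact (Mset_finite (m := m) (I := I)).subset (by rintro x ⟨g, hg, rfl⟩; exact hg.2.2.1)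
      · rintro g hg g' hg' hlead
        exact reduced_unique hg.1 hlead hg.2.2.2.1
          (fun c hc hcμ => hg.2.2.2.2 c hc (by rw [hlead]; exact hcμ))
          hg'.1 rfl hg'.2.2.2.1 (fun c hc hcμ => hg'.2.2.2.2 c hc hcμ)
    constructor
    · exact fun g hg => ⟨hg.1, hg.2.1⟩
    · intro f hfI hf
      obtain ⟨ν, hνM, hνle⟩ := exists_Mset_le (mem_Lset hfI hf)
      obtain ⟨g, hgI, hglead, hgmonic, hgred⟩ := exists_reduced hνM.1
      refine ⟨g, ⟨hgI, ne_zero_of_leadCoeff_one hgmonic, hglead ▸ hνM, hgmonic,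
        fun c hc hcμ => hgred c hc (hglead ▸ hcμ)⟩, hglead ▸ hνle⟩
  constructor
  · exact fun g hg => hg.2.2.2.1
  · intro g hg g' hg' hne c hc hle
    have hg'L : leadMon m g' ∈ Lset m I := mem_Lset hg'.1 hg'.2.1
    by_cases hcμ : c = leadMon m g
    · rw [hcμ] at hle
      have := hg.2.2.1.2 _ hg'L hle
      exact hne (reduced_unique hg'.1 this hg'.2.2.2.1 (fun e he heμ => hg'.2.2.2.2 e he
        (by rw [this]; exact heμ)) hg.1 rfl hg.2.2.2.1 (fun e he heμ => hg.2.2.2.2 e he heμ))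
    · exact hg.2.2.2.2 c hc hcμ (Lset_upper hg'L hle)

end Generic

section WOrder
variable {n : ℕ}
/-- weighted degree -/
def wdeg (w : Fin n → ℕ) (a : Fin n →₀ ℕ) : ℕ := ∑ j, w j * a j

lemma wdeg_add (w : Fin n → ℕ) (a b : Fin n →₀ ℕ) :
    wdeg w (a + b) = wdeg w a + wdeg w b := by
  simp [wdeg, Finsupp.add_apply, mul_add, Finset.sum_add_distrib]

lemma wdeg_mono (w : Fin n → ℕ) {a b : Fin n →₀ ℕ} (h : a ≤ b) :
    wdeg w a ≤ wdeg w b :=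
  Finset.sum_le_sum fun j _ => Nat.mul_le_mul_left _ (h j)

/-- embedding into a lexicographic product -/
def wEmb (w : Fin n → ℕ) (a : Fin n →₀ ℕ) : Lex (ℕ × Lex (Fin n →₀ ℕ)) :=
  toLex (wdeg w a, toLex a)

lemma wEmb_inj (w : Fin n → ℕ) : Function.Injective (wEmb w) := by
  intro a b h
  have := congrArg (fun x => (ofLex x).2) h
  simpa [wEmb] using this

/-- the synonym type carrying the weighted order -/
def WSyn (n : ℕ) (_w : Fin n → ℕ) : Type := Fin n →₀ ℕ

namespace WSyn

variable (w : Fin n → ℕ)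

/-- identity cast to the underlying finsupp -/
def toF (a : WSyn n w) : Fin n →₀ ℕ := a

instance : AddCommMonoid (WSyn n w) := inferInstanceAs (AddCommMonoid (Fin n →₀ ℕ))

instance : LinearOrder (WSyn n w) :=
  LinearOrder.lift' (fun a => wEmb w a) (wEmb_inj w)

lemma le_def {a b : WSyn n w} : a ≤ b ↔ wEmb w a ≤ wEmb w b := Iff.rfl

lemma lt_def {a b : WSyn n w} : a < b ↔ wEmb w a < wEmb w b := by
  rw [lt_iff_le_not_ge, lt_iff_le_not_ge, le_def, le_def]

lemma le_iff {a b : WSyn n w} :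
    a ≤ b ↔ wdeg w (toF w a) < wdeg w (toF w b) ∨ (wdeg w (toF w a) = wdeg w (toF w b) ∧
      toLex (toF w a) ≤ toLex (toF w b)) := by
  rw [le_def]
  unfold wEmb
  rw [Prod.Lex.le_iff]
  rfl

instance : IsOrderedCancelAddMonoid (WSyn n w) :=
  { add_le_add_left := by
      intro a b hab c
      rw [add_comm a c, add_comm b c]
      rw [le_iff] at hab ⊢
      have hw : toF w (c + a) = toF w c + toF w a := rfl
      have hw' : toF w (c + b) = toF w c + toF w b := rfl
      rcases hab with h | ⟨h1, h2⟩
      · left; rw [hw, hw', wdeg_add, wdeg_add]; omega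
      · right
        constructor
        · rw [hw, hw', wdeg_add, wdeg_add, h1]
        · rw [hw, hw', toLex_add, toLex_add]
          exact add_le_add_right h2 _
    le_of_add_le_add_left := by
      intro a b c h
      rw [le_iff] at h ⊢
      have hw : toF w (a + b) = toF w a + toF w b := rfl
      have hw' : toF w (a + c) = toF w a + toF w c := rfl
      rw [hw, hw', wdeg_add, wdeg_add, toLex_add, toLex_add] at h
      rcases h with h | ⟨h1, h2⟩
      · left; omega
      · right
        exact ⟨by omega, le_of_add_le_add_left h2⟩ }

instance : WellFoundedLT (WSyn n w) := by
  constructor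
  have : WellFounded ((· < ·) : Lex (ℕ × Lex (Fin n →₀ ℕ)) → _ → Prop) :=
    (inferInstance : WellFoundedLT (Lex (ℕ × Lex (Fin n →₀ ℕ)))).wf
  have h : Subrelation ((· < ·) : WSyn n w → WSyn n w → Prop)
      (InvImage (· < ·) (fun a : WSyn n w => wEmb w a)) := by
    intro a b hab
    exact (lt_def w).mp hab
  exact Subrelation.wf h (InvImage.wf _ this)

end WSyn

/-- the weighted monomial order -/
def wOrder (w : Fin n → ℕ) : MonomialOrder (Fin n) where
  syn := WSyn n w
  toSyn := { toEquiv := Equiv.refl _, map_add' := fun _ _ => rfl }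
  toSyn_monotone := by
    intro a b hab
    rw [WSyn.le_iff w]
    show wdeg w a < wdeg w b ∨ (wdeg w a = wdeg w b ∧ toLex a ≤ toLex b)
    rcases lt_or_eq_of_le (wdeg_mono w hab) with h | h
    · exact Or.inl h
    · exact Or.inr ⟨h, Finsupp.toLex_monotone hab⟩

lemma wOrder_le_iff (w : Fin n → ℕ) {a b : Fin n →₀ ℕ} :
    (wOrder w).toSyn a ≤ (wOrder w).toSyn b ↔
      wdeg w a < wdeg w b ∨ (wdeg w a = wdeg w b ∧ toLex a ≤ toLex b) := by
  rw [show ((wOrder w).toSyn a ≤ (wOrder w).toSyn b) ↔ _ from WSyn.le_iff w]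
  exact Iff.rfl

lemma wdeg_le_of_syn_le (w : Fin n → ℕ) {a b : Fin n →₀ ℕ}
    (h : (wOrder w).toSyn a ≤ (wOrder w).toSyn b) : wdeg w a ≤ wdeg w b := by
  rcases (wOrder_le_iff w).mp h with h | ⟨h, _⟩
  · exact le_of_lt h
  · exact le_of_eq h

lemma syn_le_of_wdeg_lt (w : Fin n → ℕ) {a b : Fin n →₀ ℕ}
    (h : wdeg w a < wdeg w b) : (wOrder w).toSyn a ≤ (wOrder w).toSyn b :=
  (wOrder_le_iff w).mpr (Or.inl h)


end WOrder

section Toric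
/-- the image of an exponent vector under A -/
def Acol (A : Matrix α β ℤ) (a : β →₀ ℕ) : α →₀ ℤ :=
  Finsupp.equivFunOnFinite.symm fun i => ∑ j, A i j * (a j : ℤ)

lemma phi_monomial (A : Matrix α β ℤ) (a : β →₀ ℕ) (c : ℂ) :
    phiMap A (monomial a c) = AddMonoidAlgebra.single (Acol A a) c := by
  classical
  rw [phiMap, MvPolynomial.aeval_monomial]
  have h1 : (a.prod fun j k => laurentMonomial (fun i => A i j) ^ k) =
      ∏ j, laurentMonomial (fun i => A i j) ^ a j :=
    Finsupp.prod_fintype _ _ (fun j => pow_zero _)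
  have h2 : ∀ j : β, laurentMonomial (fun i => A i j) ^ a j =
      AddMonoidAlgebra.single (a j • Finsupp.equivFunOnFinite.symm fun i => A i j) (1 : ℂ) := by
    intro j
    rw [laurentMonomial, AddMonoidAlgebra.single_pow, one_pow]
  rw [h1]
  simp only [h2]
  rw [AddMonoidAlgebra.prod_single, Finset.prod_const_one]
  have h3 : (∑ j, a j • Finsupp.equivFunOnFinite.symm fun i => A i j) = Acol A a := by
    ext i
    rw [Finset.sum_apply']
    simp only [Finsupp.smul_apply, Finsupp.coe_equivFunOnFinite_symm, Acol]
    exact Finset.sum_congr rfl fun j _ => by push_cast [nsmul_eq_mul]; ring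
  rw [h3]
  have h4 : (algebraMap ℂ (AddMonoidAlgebra ℂ (α →₀ ℤ))) c = AddMonoidAlgebra.single 0 c := rfl
  rw [h4, AddMonoidAlgebra.single_mul_single, zero_add, mul_one]

lemma exists_fiber {A : Matrix α β ℤ} {f : MvPolynomial β ℂ} (hf : f ∈ toricIdeal A)
    {c : β →₀ ℕ} (hc : c ∈ f.support) :
    ∃ b ∈ f.support, b ≠ c ∧ Acol A b = Acol A c := by
  classical
  by_contra hcon
  push_neg at hcon
  have hphi : phiMap A f = 0 := hf
  have hexp : phiMap A f = ∑ a ∈ f.support, AddMonoidAlgebra.single (Acol A a) (f.coeff a) := by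
    conv_lhs => rw [f.as_sum]
    rw [map_sum]
    exact Finset.sum_congr rfl fun a _ => phi_monomial A a _
  have happ : (phiMap A f).coeff (Acol A c) = f.coeff c := by
    rw [hexp, AddMonoidAlgebra.coeff_sum, Finsupp.finset_sum_apply]
    rw [Finset.sum_congr rfl (fun a _ => by rw [AddMonoidAlgebra.coeff_single, Finsupp.single_apply])]
    rw [Finset.sum_eq_single_of_mem c hc (fun b hb hbc => by rw [if_neg (hcon b hb hbc)]),
      if_pos rfl]
  rw [hphi] at happ
  simp only [AddMonoidAlgebra.coeff_zero, Finsupp.coe_zero, Pi.zero_apply] at happ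
  exact (MvPolynomial.mem_support_iff.mp hc) happ.symm

lemma Acol_pos_neg {A : Matrix α β ℤ} {v : β → ℤ} (hv : A.mulVec v = 0) :
    Acol A (posPart v) = Acol A (negPart v) := by
  ext i
  have h0 : ∑ j, A i j * v j = 0 := congrFun hv i
  simp only [Acol, Finsupp.coe_equivFunOnFinite_symm, _root_.posPart, _root_.negPart]
  have : ∀ j, A i j * (((v j).toNat : ℤ)) - A i j * (((-(v j)).toNat : ℤ)) = A i j * v j := by
    intro j
    rw [← mul_sub]
    congr 1
    omega
  calc (∑ j, A i j * (((v j).toNat : ℤ)))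
      = ∑ j, (A i j * (((-(v j)).toNat : ℤ)) + A i j * v j) := by
        refine Finset.sum_congr rfl fun j _ => ?_
        have := this j; omega
    _ = ∑ j, A i j * (((-(v j)).toNat : ℤ)) + ∑ j, A i j * v j := Finset.sum_add_distrib
    _ = ∑ j, A i j * (((-(v j)).toNat : ℤ)) := by rw [h0, add_zero]

lemma binom_mem_toricIdeal {A : Matrix α β ℤ} {v : β → ℤ} (hv : A.mulVec v = 0) :
    binom v ∈ toricIdeal A := by
  show phiMap A (binom v) = 0
  rw [binom, map_sub, phi_monomial, phi_monomial, Acol_pos_neg hv, sub_self]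

lemma sum_eq_zero_of_ker {A : Matrix α β ℤ} (hrow : RowSpanOne A)
    {v : β → ℤ} (hv : A.mulVec v = 0) : ∑ j, v j = 0 := by
  obtain ⟨w, hw⟩ := hrow
  have key : ((∑ j, v j : ℤ) : ℚ) = 0 := by
    push_cast
    have h1 : ∀ j : β, (1 : ℚ) = ∑ i, w i * (A i j : ℚ) := by
      intro j
      have := congrFun hw j
      simp only [Matrix.vecMul, dotProduct, Matrix.map_apply] at this
      rw [← this]
    have h2 : ∀ i : α, (∑ j, (A i j : ℚ) * (v j : ℚ)) = 0 := by
      intro i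
      have := congrFun hv i
      simp only [Matrix.mulVec, dotProduct, Pi.zero_apply] at this
      have : ((∑ j, A i j * v j : ℤ) : ℚ) = 0 := by rw [this]; simp
      push_cast at this
      exact this
    calc (∑ j, (v j : ℚ)) = ∑ j, (∑ i, w i * (A i j : ℚ)) * (v j : ℚ) := by
          refine Finset.sum_congr rfl fun j _ => ?_
          rw [← h1 j, one_mul]
      _ = ∑ j, ∑ i, w i * ((A i j : ℚ) * (v j : ℚ)) := by
          refine Finset.sum_congr rfl fun j _ => ?_
          rw [Finset.sum_mul]
          exact Finset.sum_congr rfl fun i _ => by ring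
      _ = ∑ i, ∑ j, w i * ((A i j : ℚ) * (v j : ℚ)) := Finset.sum_comm
      _ = ∑ i, w i * ∑ j, (A i j : ℚ) * (v j : ℚ) := by
          refine Finset.sum_congr rfl fun i _ => ?_
          rw [Finset.mul_sum]
      _ = 0 := by
          refine Finset.sum_eq_zero fun i _ => ?_
          rw [h2 i, mul_zero]
  exact_mod_cast key

lemma circuit_multiple {A : Matrix α β ℤ} {u : β → ℤ} (hu : IsCircuit A u)
    {v : β → ℤ} (hv : A.mulVec v = 0) (hsupp : ∀ j, u j = 0 → v j = 0) :
    ∃ k : ℤ, v = k • u := by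
  obtain ⟨hu0, huk, hgcd, hmin⟩ := hu
  rcases eq_or_ne v 0 with rfl | hv0
  · exact ⟨0, by simp⟩
  obtain ⟨j0, hj0⟩ := Function.ne_iff.mp hv0
  have hi0 : u j0 ≠ 0 := fun h => hj0 (hsupp j0 h)
  set wv : β → ℤ := fun j => v j0 * u j - u j0 * v j with hwv
  have hwker : A.mulVec wv = 0 := by
    funext i
    have h1 := congrFun huk i
    have h2 := congrFun hv i
    simp only [Matrix.mulVec, dotProduct, Pi.zero_apply] at h1 h2 ⊢
    simp only [hwv, mul_sub]
    rw [Finset.sum_sub_distrib]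
    have e1 : ∑ j, A i j * (v j0 * u j) = v j0 * ∑ j, A i j * u j := by
      rw [Finset.mul_sum]; exact Finset.sum_congr rfl fun j _ => by ring
    have e2 : ∑ j, A i j * (u j0 * v j) = u j0 * ∑ j, A i j * v j := by
      rw [Finset.mul_sum]; exact Finset.sum_congr rfl fun j _ => by ring
    rw [e1, e2, h1, h2]
    simp
  have hwzero : wv = 0 := by
    by_contra hw0
    have hsub : {i | wv i ≠ 0} ⊆ {i | u i ≠ 0} := by
      intro j hj
      simp only [Set.mem_setOf_eq, hwv] at hj ⊢
      intro hujz
      rw [hujz, mul_zero, zero_sub, neg_ne_zero] at hj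
      exact hj (by rw [hsupp j hujz, mul_zero])
    have heq := hmin wv hw0 hwker hsub
    have : j0 ∈ {i | wv i ≠ 0} := by
      rw [heq]; exact hi0
    simp only [Set.mem_setOf_eq, hwv] at this
    exact this (by ring)
  have hkey : ∀ j, v j0 * u j = u j0 * v j := by
    intro j
    have := congrFun hwzero j
    simp only [hwv, Pi.zero_apply] at this
    omega
  -- u j0 divides v j0
  have hdvd : u j0 ∣ v j0 := by
    have h1 : ∀ j, u j0 ∣ v j0 * u j := fun j => ⟨v j, hkey j⟩
    have h2 : u j0 ∣ Finset.gcd Finset.univ (fun j => v j0 * u j) :=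
      Finset.dvd_gcd fun j _ => h1 j
    rw [Finset.gcd_mul_left, hgcd, mul_one, ← Int.abs_eq_normalize] at h2
    rcases abs_choice (v j0) with h | h
    · rwa [h] at h2
    · rw [h] at h2; exact dvd_neg.mp h2
  obtain ⟨k, hk⟩ := hdvd
  refine ⟨k, funext fun j => ?_⟩
  have := hkey j
  rw [hk] at this
  have : u j0 * (k * u j) = u j0 * v j := by rw [← this]; ring
  have := mul_left_cancel₀ hi0 this
  simp only [Pi.smul_apply, smul_eq_mul]
  omega

end Toric

section Final

variable {d n : ℕ}

def cW (u : Fin n → ℤ) : ℕ := 1 + ∑ j, (u j).toNat * (u j).toNat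

def wVec (u : Fin n → ℤ) : Fin n → ℕ := fun j => if u j = 0 then cW u else (u j).toNat

lemma exists_pos_neg {A : Matrix (Fin d) (Fin n) ℤ} {u : Fin n → ℤ}
    (hrow : RowSpanOne A) (hu0 : u ≠ 0) (huk : A.mulVec u = 0) :
    (∃ j, 0 < u j) ∧ (∃ j, u j < 0) := by
  have hsum := sum_eq_zero_of_ker hrow huk
  obtain ⟨j0, hj0⟩ := Function.ne_iff.mp hu0
  simp only [Pi.zero_apply] at hj0
  constructor
  · by_contra h
    push_neg at h
    have hlt : ∑ j, u j < ∑ _j : Fin n, (0 : ℤ) := by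
      refine Finset.sum_lt_sum (fun j _ => h j) ⟨j0, Finset.mem_univ _, ?_⟩
      rcases lt_or_eq_of_le (h j0) with h' | h'
      · exact h'
      · exact absurd h' hj0
    simp [hsum] at hlt
  · by_contra h
    push_neg at h
    have hlt : (∑ _j : Fin n, (0 : ℤ)) < ∑ j, u j := by
      refine Finset.sum_lt_sum (fun j _ => h j) ⟨j0, Finset.mem_univ _, ?_⟩
      rcases lt_or_eq_of_le (h j0) with h' | h'
      · exact h'
      · exact absurd h'.symm hj0
    simp [hsum] at hlt

lemma posPart_apply (u : Fin n → ℤ) (j : Fin n) : _root_.posPart u j = (u j).toNat := rfl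

lemma negPart_apply (u : Fin n → ℤ) (j : Fin n) : _root_.negPart u j = (-(u j)).toNat := rfl

lemma wdeg_posPart (u : Fin n → ℤ) :
    wdeg (wVec u) (_root_.posPart u) = ∑ j, (u j).toNat * (u j).toNat := by
  refine Finset.sum_congr rfl fun j _ => ?_
  rw [posPart_apply, wVec]
  by_cases h : u j = 0
  · simp [h]
  · rw [if_neg h]

lemma wdeg_negPart (u : Fin n → ℤ) : wdeg (wVec u) (_root_.negPart u) = 0 := by
  refine Finset.sum_eq_zero fun j _ => ?_
  rw [negPart_apply, wVec]
  by_cases h : u j = 0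
  · simp [h]
  · rw [if_neg h]
    rcases lt_trichotomy (u j) 0 with h' | h' | h'
    · have : (u j).toNat = 0 := by omega
      rw [this, zero_mul]
    · exact absurd h' h
    · have : (-(u j)).toNat = 0 := by omega
      rw [this, mul_zero]

lemma wdeg_posPart_pos {u : Fin n → ℤ} (hp : ∃ j, 0 < u j) :
    0 < wdeg (wVec u) (_root_.posPart u) := by
  obtain ⟨jp, hjp⟩ := hp
  rw [wdeg_posPart]
  refine Finset.sum_pos' (fun j _ => Nat.zero_le _) ⟨jp, Finset.mem_univ _, ?_⟩
  have : 0 < (u jp).toNat := by omega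
  positivity

lemma wdeg_posPart_lt_cW (u : Fin n → ℤ) : wdeg (wVec u) (_root_.posPart u) < cW u := by
  rw [wdeg_posPart, cW]; omega

lemma supp_of_wdeg_lt {u : Fin n → ℤ} {b : Fin n →₀ ℕ} (h : wdeg (wVec u) b < cW u) :
    ∀ j, u j = 0 → b j = 0 := by
  intro j hj
  by_contra hb
  have h1 : wVec u j * b j ≤ wdeg (wVec u) b :=
    Finset.single_le_sum (f := fun j => wVec u j * b j) (fun _ _ => Nat.zero_le _)
      (Finset.mem_univ j)
  rw [wVec, if_pos hj] at h1
  have : 1 ≤ b j := Nat.one_le_iff_ne_zero.mpr hb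
  nlinarith

lemma posPart_ne_negPart {u : Fin n → ℤ} (hp : ∃ j, 0 < u j) : _root_.posPart u ≠ _root_.negPart u := by
  obtain ⟨jp, hjp⟩ := hp
  intro h
  have h2 : _root_.posPart u jp = _root_.negPart u jp := by rw [h]
  rw [posPart_apply, negPart_apply] at h2
  omega

lemma coeff_binom_posPart {u : Fin n → ℤ} (hp : ∃ j, 0 < u j) :
    (binom u).coeff (_root_.posPart u) = 1 := by
  classical
  rw [binom, MvPolynomial.coeff_sub, MvPolynomial.coeff_monomial, MvPolynomial.coeff_monomial,
    if_pos rfl, if_neg (Ne.symm (posPart_ne_negPart hp))]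
  norm_num

lemma coeff_binom_negPart {u : Fin n → ℤ} (hp : ∃ j, 0 < u j) :
    (binom u).coeff (_root_.negPart u) = -1 := by
  classical
  rw [binom, MvPolynomial.coeff_sub, MvPolynomial.coeff_monomial, MvPolynomial.coeff_monomial,
    if_neg (posPart_ne_negPart hp), if_pos rfl]
  norm_num

lemma supp_binom_subset {u : Fin n → ℤ} :
    (binom u).support ⊆ {_root_.posPart u, _root_.negPart u} := by
  classical
  intro c hc
  rw [MvPolynomial.mem_support_iff, binom, MvPolynomial.coeff_sub,
    MvPolynomial.coeff_monomial, MvPolynomial.coeff_monomial] at hc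
  by_cases h1 : _root_.posPart u = c
  · rw [Finset.mem_insert]; exact Or.inl h1.symm
  by_cases h2 : _root_.negPart u = c
  · rw [Finset.mem_insert, Finset.mem_singleton]; exact Or.inr h2.symm
  rw [if_neg h1, if_neg h2, sub_zero] at hc
  exact absurd rfl hc

lemma binom_ne_zero {u : Fin n → ℤ} (hp : ∃ j, 0 < u j) : binom u ≠ 0 := by
  intro h
  have := coeff_binom_posPart hp
  rw [h] at this
  simp at this

lemma leadMon_binom {u : Fin n → ℤ} (hp : ∃ j, 0 < u j) :
    leadMon (wOrder (wVec u)) (binom u) = _root_.posPart u := by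
  apply leadMon_eq_of
  · rw [MvPolynomial.mem_support_iff, coeff_binom_posPart hp]; exact one_ne_zero
  · intro c hc
    rcases Finset.mem_insert.mp (supp_binom_subset hc) with h | h
    · rw [h]
    · rw [Finset.mem_singleton.mp h]
      apply syn_le_of_wdeg_lt
      rw [wdeg_negPart]
      exact wdeg_posPart_pos hp

lemma leadCoeff_binom {u : Fin n → ℤ} (hp : ∃ j, 0 < u j) :
    leadCoeff (wOrder (wVec u)) (binom u) = 1 := by
  rw [leadCoeff, leadMon_binom hp, coeff_binom_posPart hp]

lemma mulVec_of_Acol_eq {A : Matrix (Fin d) (Fin n) ℤ} {b c : Fin n →₀ ℕ}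
    (h : Acol A b = Acol A c) : A.mulVec (fun j => (c j : ℤ) - b j) = 0 := by
  funext i
  have := congrFun (congrArg (fun f : Fin d →₀ ℤ => (f : Fin d → ℤ)) h) i
  simp only [Acol, Finsupp.coe_equivFunOnFinite_symm] at this
  simp only [Matrix.mulVec, dotProduct, Pi.zero_apply, mul_sub]
  rw [Finset.sum_sub_distrib]
  omega

/-- Key lemma A : `_root_.posPart u` is a minimal element of the set of lead monomials. -/
lemma keyA {A : Matrix (Fin d) (Fin n) ℤ} {u : Fin n → ℤ} (hu : IsCircuit A u)
    (hrow : RowSpanOne A) :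
    ∀ c ∈ Lset (wOrder (wVec u)) (toricIdeal A), c ≤ _root_.posPart u → c = _root_.posPart u := by
  obtain ⟨hp, hm⟩ := exists_pos_neg hrow hu.1 hu.2.1
  rintro c ⟨f, hfI, hf, hlead⟩ hle
  obtain ⟨b, hbsupp, hbc, hAcol⟩ := exists_fiber hfI (hlead ▸ leadMon_mem_support hf)
  have hwc : wdeg (wVec u) c < cW u :=
    lt_of_le_of_lt (wdeg_mono _ hle) (wdeg_posPart_lt_cW u)
  have hwb : wdeg (wVec u) b < cW u := by
    have h1 : (wOrder (wVec u)).toSyn b ≤ (wOrder (wVec u)).toSyn c := by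
      rw [← hlead]; exact le_leadMon hbsupp
    exact lt_of_le_of_lt (wdeg_le_of_syn_le _ h1) hwc
  set v : Fin n → ℤ := fun j => (c j : ℤ) - b j with hv
  have hvker : A.mulVec v = 0 := mulVec_of_Acol_eq hAcol
  have hvsupp : ∀ j, u j = 0 → v j = 0 := by
    intro j hj
    have h1 := supp_of_wdeg_lt hwb j hj
    have h2 := supp_of_wdeg_lt hwc j hj
    simp [hv, h1, h2]
  obtain ⟨k, hk⟩ := circuit_multiple hu hvker hvsupp
  have hv0 : v ≠ 0 := by
    intro h0
    apply hbc
    ext j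
    have := congrFun h0 j
    simp only [hv, Pi.zero_apply] at this
    omega
  have hk0 : k ≠ 0 := by
    rintro rfl
    rw [zero_smul] at hk
    exact hv0 hk
  have hkapp : ∀ j, (c j : ℤ) - b j = k * u j := by
    intro j
    have := congrFun hk j
    simpa [hv] using this
  -- rule out k < 0
  rcases lt_trichotomy k 0 with hkneg | hkz | hkpos
  · exfalso
    obtain ⟨jm, hjm⟩ := hm
    have h1 := hkapp jm
    have h2 : (c jm : ℤ) ≤ (u jm).toNat := by exact_mod_cast hle jm
    have h3 : (u jm).toNat = 0 := by omega
    nlinarith [Int.natCast_nonneg (b jm)]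
  · exact absurd hkz hk0
  · -- k ≥ 1 : conclude k = 1 and c = _root_.posPart u
    obtain ⟨jp, hjp⟩ := hp
    have hk1 : k = 1 := by
      have h1 := hkapp jp
      have h2 : (c jp : ℤ) ≤ (u jp).toNat := by exact_mod_cast hle jp
      have h4 : ((u jp).toNat : ℤ) = u jp := Int.toNat_of_nonneg (le_of_lt hjp)
      nlinarith [Int.natCast_nonneg (b jp)]
    ext j
    rw [posPart_apply]
    have h1 := hkapp j
    rw [hk1, one_mul] at h1
    have h2 : (c j : ℤ) ≤ (u j).toNat := by exact_mod_cast hle j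
    omega

/-- Key lemma B : `_root_.negPart u` is not a lead monomial. -/
lemma keyB {A : Matrix (Fin d) (Fin n) ℤ} {u : Fin n → ℤ} (hu : IsCircuit A u)
    (hrow : RowSpanOne A) :
    _root_.negPart u ∉ Lset (wOrder (wVec u)) (toricIdeal A) := by
  obtain ⟨hp, hm⟩ := exists_pos_neg hrow hu.1 hu.2.1
  rintro ⟨f, hfI, hf, hlead⟩
  obtain ⟨b, hbsupp, hbc, hAcol⟩ := exists_fiber hfI (hlead ▸ leadMon_mem_support hf)
  have hwc : wdeg (wVec u) (_root_.negPart u) = 0 := wdeg_negPart u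
  have hwb : wdeg (wVec u) b = 0 := by
    have h1 : (wOrder (wVec u)).toSyn b ≤ (wOrder (wVec u)).toSyn (_root_.negPart u) := by
      rw [← hlead]; exact le_leadMon hbsupp
    have := wdeg_le_of_syn_le _ h1
    omega
  have hcW : 0 < cW u := by rw [cW]; omega
  set v : Fin n → ℤ := fun j => ((_root_.negPart u j : ℤ)) - b j with hv
  have hvker : A.mulVec v = 0 := mulVec_of_Acol_eq hAcol
  have hvsupp : ∀ j, u j = 0 → v j = 0 := by
    intro j hj
    have h1 := supp_of_wdeg_lt (hwb ▸ hcW) j hj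
    have h2 : _root_.negPart u j = 0 := by rw [negPart_apply]; omega
    simp [hv, h1, h2]
  obtain ⟨k, hk⟩ := circuit_multiple hu hvker hvsupp
  have hkapp : ∀ j, ((_root_.negPart u j : ℤ)) - b j = k * u j := by
    intro j
    have := congrFun hk j
    simpa [hv] using this
  -- contradiction at a positive coordinate
  obtain ⟨jp, hjp⟩ := hp
  have hbjp : b jp = 0 := by
    by_contra hb
    have h1 : wVec u jp * b jp ≤ wdeg (wVec u) b :=
      Finset.single_le_sum (f := fun j => wVec u j * b j) (fun _ _ => Nat.zero_le _)
        (Finset.mem_univ jp)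
    rw [hwb] at h1
    have h2 : wVec u jp = (u jp).toNat := by rw [wVec, if_neg (by omega)]
    have h3 : 0 < (u jp).toNat := by omega
    have : 1 ≤ b jp := Nat.one_le_iff_ne_zero.mpr hb
    nlinarith
  have h1 := hkapp jp
  have h2 : _root_.negPart u jp = 0 := by rw [negPart_apply]; omega
  rw [h2, hbjp] at h1
  simp only [Nat.cast_zero, sub_zero] at h1
  -- 0 = k * u jp with u jp > 0 forces k = 0, hence v = 0, hence b = _root_.negPart u
  have hk0 : k = 0 := by nlinarith
  apply hbc
  ext j
  have := hkapp j
  rw [hk0, zero_mul] at this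
  omega

end Final

/-- For every circuit `u` of `A`, the binomial `x^{u⁺} - x^{u⁻}` belongs to the
universal Gröbner basis of the toric ideal `I_A`, i.e. it appears in the reduced Gröbner
basis of `I_A` for some term order. -/
theorem circuit_mem_universalGroebnerBasis (d n : ℕ) (A : Matrix (Fin d) (Fin n) ℤ)
    (hrank : A.rank = d) (hpointed : PointedCone' A) (hrow : RowSpanOne A)
    (u : Fin n → ℤ) (hu : IsCircuit A u) :
    binom u ∈ universalGroebnerBasis (toricIdeal A) := by
  obtain ⟨hp, hm⟩ := exists_pos_neg hrow hu.1 hu.2.1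
  refine ⟨wOrder (wVec u), Gset (wOrder (wVec u)) (toricIdeal A), Gset_isReducedGB, ?_⟩
  refine ⟨binom_mem_toricIdeal hu.2.1, binom_ne_zero hp, ?_, ?_, ?_⟩
  · rw [leadMon_binom hp]
    exact ⟨by rw [← leadMon_binom hp]
              exact mem_Lset (binom_mem_toricIdeal hu.2.1) (binom_ne_zero hp),
           keyA hu hrow⟩
  · exact leadCoeff_binom hp
  · intro c hc hcne
    rcases Finset.mem_insert.mp (supp_binom_subset hc) with h | h
    · exact absurd (h.trans (leadMon_binom hp).symm) hcne
    · rw [Finset.mem_singleton.mp h]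
      exact keyB hu hrow
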